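/- Let t be a positive integer and let x, y be nonzero integers with 0 < P_t(x,y) ≤ t^2. If ω_j ∈ {1, i, −1, −i} attains the minimum of |i^k − η(x,y)/ξ(x,y)| over k = 0, 1, 2, 3, then |ω_j − η(x,y)/ξ(x,y)| < (π/12)·|z(x,y)|; in particular (x,y) is related to exactly one fourth root of unity. -/

import Mathlib

/-- The quartic form `P_t(x,y) = x^4 + 4t x^3 y - 6t x^2 y^2 - 4t^2 x y^3 + t^2 y^4`. -/
def Pquartic (t x y : ℤ) : ℤ :=
  x ^ 4 + 4 * t * x ^ 3 * y - 6 * t * x ^ 2 * y ^ 2 - 4 * t ^ 2 * x * y ^ 3 + t ^ 2 * y ^ 4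

/-- Auxiliary: fourth powers of nonnegative reals determine them. -/
lemma quart_inj_aux {A B : ℝ} (hA : 0 ≤ A) (hB : 0 ≤ B) (h : A^4 = B^4) : A = B :=
  (pow_left_strictMonoOn₀ (n := 4) (by norm_num)).eq_iff_eq hA hB |>.mp h

set_option maxHeartbeats 4000000 in
/-- Let `t` be a positive integer, and let `ξ, η` be the resolvent forms built from
`δ, ε` with `δ^4 = 4(i√t + 1)`, `ε^4 = 4(i√t - 1)`.  If `x, y` are nonzero integers
with `0 < P_t(x,y) ≤ t^2`, and `ω ∈ {1, i, -1, -i}` attains the minimum of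
`|ω' - η/ξ|` over the fourth roots of unity, then `|ω - η/ξ| < (π/12)|z(x,y)|`;
in particular `(x,y)` is related to exactly one fourth root of unity. -/
theorem related_to_unique_fourth_root (t : ℕ) (ht : 0 < t) (δ ε : ℂ)
    (hδ : δ ^ 4 = 4 * (Complex.I * (Real.sqrt t : ℂ) + 1))
    (hε : ε ^ 4 = 4 * (Complex.I * (Real.sqrt t : ℂ) - 1))
    (x y : ℤ) (hx : x ≠ 0) (hy : y ≠ 0)
    (hP0 : 0 < Pquartic t x y) (hPt : Pquartic t x y ≤ (t : ℤ) ^ 2)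
    (ξ η z : ℂ)
    (hξ : ξ = δ * ((x : ℂ) - Complex.I * (Real.sqrt t : ℂ) * (y : ℂ)))
    (hη : η = ε * ((x : ℂ) + Complex.I * (Real.sqrt t : ℂ) * (y : ℂ)))
    (hz : z = 1 - (η / ξ) ^ 4)
    (ω : ℂ) (hω : ω ∈ ({1, Complex.I, -1, -Complex.I} : Set ℂ))
    (hmin : ∀ ω' ∈ ({1, Complex.I, -1, -Complex.I} : Set ℂ), ‖ω - η / ξ‖ ≤ ‖ω' - η / ξ‖) :
    ‖ω - η / ξ‖ < Real.pi / 12 * ‖z‖ ∧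
    ∃! ω' : ℂ, ω' ∈ ({1, Complex.I, -1, -Complex.I} : Set ℂ) ∧
      ‖ω' - η / ξ‖ < Real.pi / 12 * ‖z‖ := by
  have hωmem := hω
  have hsq : ∀ c : ℂ, ‖c‖^2 = c.re^2 + c.im^2 := fun c => by
    rw [Complex.sq_norm, Complex.normSq_apply]; ring
  obtain ⟨hω4, hωn, hω0⟩ : ω^4 = 1 ∧ Complex.normSq ω = 1 ∧ ω ≠ 0 := by
    have h4 : (-Complex.I)^4 = 1 := by
      rw [show (-Complex.I)^4 = (Complex.I^2)^2 by ring, Complex.I_sq]; norm_num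
    simp only [Set.mem_insert_iff, Set.mem_singleton_iff] at hω
    rcases hω with rfl|rfl|rfl|rfl <;>
      norm_num [Complex.normSq_apply, Complex.I_ne_zero, Complex.I_pow_four, h4]
  have htR : (1:ℝ) ≤ (t:ℝ) := by exact_mod_cast ht
  set s : ℝ := Real.sqrt t with hsdef
  have hs : s^2 = (t:ℝ) := Real.sq_sqrt (by positivity)
  have hs2 : ((s:ℝ):ℂ)^2 = (t:ℂ) := by
    rw [← Complex.ofReal_pow, hs]; push_cast; ring
  -- nonvanishing
  have hnδ : Complex.normSq (δ^4) = 16*((t:ℝ)+1) := by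
    rw [hδ]; simp [Complex.normSq_apply]; nlinarith only [hs]
  have hnε : Complex.normSq (ε^4) = 16*((t:ℝ)+1) := by
    rw [hε]; simp [Complex.normSq_apply]; nlinarith only [hs]
  have hx1 : (1:ℝ) ≤ (x:ℝ)^2 := by
    have h : (1:ℤ) ≤ x^2 := by nlinarith only [Int.one_le_abs hx, abs_nonneg x, sq_abs x]
    exact_mod_cast h
  have hy1 : (1:ℝ) ≤ (y:ℝ)^2 := by
    have h : (1:ℤ) ≤ y^2 := by nlinarith only [Int.one_le_abs hy, abs_nonneg y, sq_abs y]
    exact_mod_cast h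
  have hnA : Complex.normSq ((x:ℂ) - Complex.I*(s:ℂ)*(y:ℂ)) = (x:ℝ)^2 + (t:ℝ)*(y:ℝ)^2 := by
    simp [Complex.normSq_apply]; nlinarith only [hs]
  have hnB : Complex.normSq ((x:ℂ) + Complex.I*(s:ℂ)*(y:ℂ)) = (x:ℝ)^2 + (t:ℝ)*(y:ℝ)^2 := by
    simp [Complex.normSq_apply]; nlinarith only [hs]
  set Q : ℝ := (x:ℝ)^2 + (t:ℝ)*(y:ℝ)^2 with hQdef
  have hQge : (t:ℝ)+1 ≤ Q := by rw [hQdef]; nlinarith only [hx1, hy1, htR]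
  have hQpos : (0:ℝ) < Q := by nlinarith only [hQge, htR]
  have hδ0 : δ ≠ 0 := by
    intro h; rw [h] at hnδ; simp at hnδ; nlinarith only [hnδ, htR]
  have hA0 : ((x:ℂ) - Complex.I*(s:ℂ)*(y:ℂ)) ≠ 0 := by
    intro h; rw [h] at hnA; simp at hnA; nlinarith only [hnA, hQpos]
  have hξ0 : ξ ≠ 0 := by rw [hξ]; exact mul_ne_zero hδ0 hA0
  -- norm computations
  have hNξ : (Complex.normSq ξ)^4 = 16*((t:ℝ)+1)*Q^4 := by
    rw [hξ, map_mul, mul_pow, hnA, ← map_pow, hnδ]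
  have hNη : (Complex.normSq η)^4 = 16*((t:ℝ)+1)*Q^4 := by
    rw [hη, map_mul, mul_pow, hnB, ← map_pow, hnε]
  have hnormeq : Complex.normSq η = Complex.normSq ξ :=
    quart_inj_aux (Complex.normSq_nonneg _) (Complex.normSq_nonneg _) (by rw [hNξ, hNη])
  -- P
  set P : ℤ := Pquartic t x y with hPdef
  have hPR : (0:ℝ) < (P:ℝ) := by exact_mod_cast hP0
  have hPtR : (P:ℝ) ≤ (t:ℝ)^2 := by
    have : (P:ℝ) ≤ ((t:ℤ):ℝ)^2 := by exact_mod_cast hPt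
    simpa using this
  -- the key algebraic identity
  have hkey : ξ^4 - η^4 = 8*((P:ℤ):ℂ) := by
    rw [hξ, hη, mul_pow, mul_pow, hδ, hε]
    push_cast [hPdef, Pquartic]
    linear_combination (48*(s:ℂ)^2*(x:ℂ)^2*(y:ℂ)^2 - 32*(s:ℂ)^2*(x:ℂ)^3*(y:ℂ)
        - 8*(s:ℂ)^4*(y:ℂ)^4 + 32*(s:ℂ)^4*(x:ℂ)*(y:ℂ)^3
        + 8*Complex.I^2*(s:ℂ)^4*(y:ℂ)^4
        - 32*Complex.I^2*(s:ℂ)^4*(x:ℂ)*(y:ℂ)^3) * Complex.I_sq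
      + (8*(y:ℂ)^4*(t:ℂ) - 32*(x:ℂ)*(y:ℂ)^3*(t:ℂ) - 48*(x:ℂ)^2*(y:ℂ)^2 + 32*(x:ℂ)^3*(y:ℂ)
        + 8*(s:ℂ)^2*(y:ℂ)^4 - 32*(s:ℂ)^2*(x:ℂ)*(y:ℂ)^3) * hs2
  -- w and u
  set w : ℂ := η / ξ with hwdef
  set u : ℂ := w / ω with hudef
  have hwu : w = ω * u := by rw [hudef]; field_simp
  set a : ℝ := u.re with hadef
  set b : ℝ := u.im with hbdef
  have hnu : a^2 + b^2 = 1 := by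
    have h1 : Complex.normSq u = 1 := by
      rw [hudef, map_div₀, hwdef, map_div₀, hnormeq, hωn,
        div_self (ne_of_gt (Complex.normSq_pos.mpr hξ0)), div_one]
    rw [Complex.normSq_apply] at h1
    rw [hadef, hbdef]; nlinarith only [h1]
  -- distances
  have hdist : ∀ ζ : ℂ, ‖ζ*ω - w‖^2 = Complex.normSq (ζ - u) := by
    intro ζ
    have h1 : ζ*ω - w = ω*(ζ - u) := by rw [hwu]; ring
    rw [h1, Complex.sq_norm, map_mul, hωn, one_mul]
  have e0 : ‖ω - w‖^2 = (1-a)^2 + b^2 := by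
    have h := hdist 1; rw [one_mul] at h; rw [h]
    simp [Complex.normSq_apply, hadef, hbdef]; ring
  have eI : ‖Complex.I*ω - w‖^2 = a^2 + (1-b)^2 := by
    rw [hdist Complex.I]
    simp [Complex.normSq_apply, hadef, hbdef]; ring
  have eneg : ‖(-1:ℂ)*ω - w‖^2 = (1+a)^2 + b^2 := by
    rw [hdist (-1)]
    simp [Complex.normSq_apply, hadef, hbdef]; ring
  have enegI : ‖(-Complex.I)*ω - w‖^2 = a^2 + (1+b)^2 := by
    rw [hdist (-Complex.I)]
    simp [Complex.normSq_apply, hadef, hbdef]; ring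
  -- memberships of rotates
  have hmems : (Complex.I*ω ∈ ({1, Complex.I, -1, -Complex.I} : Set ℂ)) ∧
      ((-1:ℂ)*ω ∈ ({1, Complex.I, -1, -Complex.I} : Set ℂ)) ∧
      ((-Complex.I)*ω ∈ ({1, Complex.I, -1, -Complex.I} : Set ℂ)) := by
    have hc := hωmem
    simp only [Set.mem_insert_iff, Set.mem_singleton_iff] at hc ⊢
    rcases hc with rfl|rfl|rfl|rfl <;> norm_num [Complex.I_mul_I]
  -- minimality constraints
  have hba : b ≤ a := by
    have h := pow_le_pow_left₀ (norm_nonneg _) (hmin _ hmems.1) 2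
    rw [e0, eI] at h; nlinarith only [h]
  have ha0 : 0 ≤ a := by
    have h := pow_le_pow_left₀ (norm_nonneg _) (hmin _ hmems.2.1) 2
    rw [e0, eneg] at h; nlinarith only [h]
  have hnb : -b ≤ a := by
    have h := pow_le_pow_left₀ (norm_nonneg _) (hmin _ hmems.2.2) 2
    rw [e0, enegI] at h; nlinarith only [h]
  -- z in terms of u
  have hzu : z = (1-u)*(1+u)*(1+u^2) := by
    rw [hz, hwu]; linear_combination (-(u^4)) * hω4
  have hNzu : Complex.normSq z = 16*a^2*(1-a^2) := by
    have e1 : Complex.normSq (1-u) = (1-a)^2 + b^2 := by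
      simp [Complex.normSq_apply, hadef, hbdef]; ring
    have e2 : Complex.normSq (1+u) = (1+a)^2 + b^2 := by
      simp [Complex.normSq_apply, hadef, hbdef]; ring
    have e3 : Complex.normSq (1+u^2) = (1+a^2-b^2)^2 + (2*a*b)^2 := by
      simp [Complex.normSq_apply, pow_two, Complex.mul_re, Complex.mul_im, hadef, hbdef]; ring
    rw [hzu, map_mul, map_mul, e1, e2, e3]
    linear_combination (-1 - b^2 + b^4 + b^6 + 15*a^2 + 2*a^2*b^2 + 3*a^2*b^4 + a^4
      + 3*a^4*b^2 + a^6) * hnu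
  -- z in terms of P
  have hzm : z * ξ^4 = 8*((P:ℤ):ℂ) := by
    rw [hz, hwdef]
    field_simp
    linear_combination hkey
  have h8P : Complex.normSq (8*((P:ℤ):ℂ)) = 64*(P:ℝ)^2 := by
    simp [Complex.normSq_apply, Complex.mul_re, Complex.mul_im]; push_cast; ring
  have hNzP : Complex.normSq z * (16*((t:ℝ)+1)*Q^4) = 64*(P:ℝ)^2 := by
    have h := congrArg Complex.normSq hzm
    rw [map_mul, map_pow, h8P] at h
    calc Complex.normSq z * (16*((t:ℝ)+1)*Q^4)
        = Complex.normSq z * (Complex.normSq ξ)^4 := by rw [hNξ]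
      _ = 64*(P:ℝ)^2 := h
  have hD : (0:ℝ) < 16*((t:ℝ)+1)*Q^4 := by positivity
  -- bound on normSq z
  have hQ4 : ((t:ℝ)+1)^4 ≤ Q^4 := pow_le_pow_left₀ (by positivity) hQge 4
  have hAM : 12500*(t:ℝ)^4 ≤ 1024*((t:ℝ)+1)^5 := by
    nlinarith only [mul_nonneg (sq_nonneg ((t:ℝ)-4))
      (show (0:ℝ) ≤ 1024*(t:ℝ)^3+812*(t:ℝ)^2+352*(t:ℝ)+64 by positivity)]
  have hP2 : (P:ℝ)^2 ≤ (t:ℝ)^4 := by nlinarith only [hPR, hPtR, htR]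
  have hzb : Complex.normSq z ≤ 1024/3125 := by
    have h1 : 3125*(64*(P:ℝ)^2) ≤ 1024*(16*((t:ℝ)+1)*Q^4) := by
      nlinarith only [hAM, hP2,
        mul_le_mul_of_nonneg_left hQ4 (show (0:ℝ) ≤ ((t:ℝ)+1) by positivity)]
    nlinarith only [hNzP, hD, h1]
  have hzpos : 0 < Complex.normSq z := by nlinarith only [hNzP, hD, hPR]
  -- bounds on a
  have haa : 16*a^2*(1-a^2) ≤ 1024/3125 := by rw [← hNzu]; exact hzb
  have ha2 : 1/2 ≤ a^2 := by nlinarith only [hba, hnb, ha0, hnu]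
  have h1a2 : 1-a^2 ≤ 128/3125 := by nlinarith only [haa, ha2]
  have ha979 : (979/1000:ℝ) ≤ a := by nlinarith only [ha0, ha2, h1a2]
  have ha1 : a < 1 := by
    rcases lt_or_ge a 1 with h|h
    · exact h
    · exfalso
      have hb2 : b^2 = 0 := le_antisymm (by nlinarith only [hnu, h]) (sq_nonneg b)
      have hb0 : b = 0 := by
        have := sq_eq_zero_iff.mp hb2; exact this
      have hae : a = 1 := by nlinarith only [hnu, hb0, h]
      have hu1 : u = 1 := by
        apply Complex.ext
        · rw [← hadef, hae]; simp
        · rw [← hbdef, hb0]; simp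
      rw [hu1] at hzu; simp at hzu
      rw [hzu] at hzpos; simp at hzpos
  -- main inequality
  have hm2 : ‖ω - w‖^2 = 2-2*a := by rw [e0]; linear_combination hnu
  have hznorm2 : ‖z‖^2 = 16*a^2*(1-a^2) := by
    rw [Complex.sq_norm, hNzu]
  have hπ1 : (3.1415:ℝ) < Real.pi := by linarith only [Real.pi_gt_d6]
  have hK : (18:ℝ) < Real.pi^2*a^2*(1+a) := by
    have hp2 : (9.869:ℝ) < Real.pi^2 := by nlinarith only [hπ1]
    have hA2 : (2997/3125:ℝ) ≤ a^2 := by nlinarith only [h1a2, hnu, sq_nonneg b]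
    have h3 : (9.869:ℝ)*(2997/3125) < Real.pi^2*a^2 := by nlinarith only [hp2, hA2]
    have h4 : (9.869:ℝ)*(2997/3125)*(1+979/1000) ≤ Real.pi^2*a^2*(1+a) := by
      nlinarith only [h3, ha979, ha0]
    nlinarith only [h4]
  have hfirst : ‖ω - w‖ < Real.pi/12*‖z‖ := by
    have hsq2 : ‖ω - w‖^2 < (Real.pi/12*‖z‖)^2 := by
      have hr : (Real.pi/12*‖z‖)^2 = Real.pi^2/144*(16*a^2*(1-a^2)) := by
        rw [mul_pow, hznorm2]; ring
      rw [hm2, hr]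
      nlinarith only [mul_pos (show (0:ℝ) < 1-a by linarith) (show (0:ℝ) < Real.pi^2*a^2*(1+a)-18 by linarith)]
    have hr0 : (0:ℝ) ≤ Real.pi/12*‖z‖ := by positivity
    nlinarith only [hsq2, norm_nonneg (ω - w), hr0]
  refine ⟨hfirst, ω, ⟨hωmem, hfirst⟩, ?_⟩
  rintro ω' ⟨hm', hlt'⟩
  by_contra hne
  have hz2 : ‖z‖ ≤ 2 := by
    nlinarith only [hznorm2, norm_nonneg z, sq_nonneg (1-2*a^2), hnu, sq_nonneg b]
  have hπ2 : Real.pi < 3.15 := Real.pi_lt_d2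
  have hb1 : ‖ω - w‖ < 0.525 := by
    have : Real.pi/12*‖z‖ ≤ Real.pi/12*2 := by
      apply mul_le_mul_of_nonneg_left hz2 (by positivity)
    linarith only [hfirst, this, hπ2]
  have hb2 : ‖ω' - w‖ < 0.525 := by
    have : Real.pi/12*‖z‖ ≤ Real.pi/12*2 := by
      apply mul_le_mul_of_nonneg_left hz2 (by positivity)
    linarith only [hlt', this, hπ2]
  have htri : ‖ω - ω'‖ < 1.05 := by
    have h := norm_sub_le (ω - w) (ω' - w)
    have he : (ω - w) - (ω' - w) = ω - ω' := by ring
    rw [he] at h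
    linarith only [h, hb1, hb2]
  have h2 : (2:ℝ) ≤ ‖ω - ω'‖^2 := by
    simp only [Set.mem_insert_iff, Set.mem_singleton_iff] at hωmem hm'
    rcases hωmem with h1|h1|h1|h1 <;> rcases hm' with hh|hh|hh|hh <;>
      first
        | (exact absurd (hh.trans h1.symm) hne)
        | (rw [h1, hh, hsq]; norm_num [Complex.sub_re, Complex.sub_im, Complex.one_re,
            Complex.one_im, Complex.I_re, Complex.I_im, Complex.neg_re, Complex.neg_im])
  nlinarith only [htri, h2, norm_nonneg (ω - ω')]
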